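/- arXiv:2208.00577 — 4 statements merged into one kernel-verified Lean document; each statement's English description precedes it below -/
import Mathlib

section
/- Let m ≥ 1 and ℓ ≥ 2. Suppose (x_1,…,x_ℓ) is an (ℓ−1,m)-Dyck path (i.e. x_1+⋯+x_{1+i} ≤ m(i+1) for 0 ≤ i ≤ ℓ−2 and x_1+⋯+x_ℓ = mℓ), and let x_0 be a nonnegative integer with x_0 ≤ m. Then x' = (x_0, x_1, …, x_{ℓ−1}, x'_ℓ), where x'_ℓ = m(ℓ+1) − (x_0 + x_1 + ⋯ + x_{ℓ−1}), is an (ℓ,m)-Dyck path, and degr(x') ≤ x_0·(ℓ−1) + degr(x). -/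
open Finset

/-- Partial sum of the first `i` entries of a sequence. -/
def pSum (x : ℕ → ℤ) (i : ℕ) : ℤ := ∑ k ∈ Finset.range i, x k

/-- An `(ℓ,m)`-Dyck path in step coordinates, encoded as a sequence `ℕ → ℤ` of
nonnegative integers vanishing beyond index `ℓ`. -/
def IsDyck (ℓ m : ℕ) (x : ℕ → ℤ) : Prop :=
  (∀ i, 0 ≤ x i) ∧
  (∀ i < ℓ, pSum x (i + 1) ≤ (m : ℤ) * (i + 1)) ∧
  pSum x (ℓ + 1) = (m : ℤ) * (ℓ + 1) ∧
  (∀ i, ℓ < i → x i = 0)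

/-- `δ⁺_{ij}(x) = min(x_i, max(0, (x_i−m)+⋯+(x_j−m)−1))`. -/
def deltaP (m : ℕ) (x : ℕ → ℤ) (i j : ℕ) : ℤ :=
  min (x i) (max 0 ((∑ k ∈ Finset.Icc i j, (x k - (m : ℤ))) - 1))

/-- `δ⁻_{ij}(x) = min(x_{i−1}, max(0, (m−x_i)+⋯+(m−x_j)))`. -/
def deltaM (m : ℕ) (x : ℕ → ℤ) (i j : ℕ) : ℤ :=
  min (x (i - 1)) (max 0 (∑ k ∈ Finset.Icc i j, ((m : ℤ) - x k)))

/-- `degr⁺(x) = Σ_{1 ≤ i ≤ j ≤ ℓ−1} δ⁺_{ij}(x)`. -/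
def degrP (ℓ m : ℕ) (x : ℕ → ℤ) : ℤ :=
  ∑ i ∈ Finset.Icc 1 (ℓ - 1), ∑ j ∈ Finset.Icc i (ℓ - 1), deltaP m x i j

/-- `degr⁻(x) = Σ_{1 ≤ i ≤ j ≤ ℓ−1} δ⁻_{ij}(x)`. -/
def degrM (ℓ m : ℕ) (x : ℕ → ℤ) : ℤ :=
  ∑ i ∈ Finset.Icc 1 (ℓ - 1), ∑ j ∈ Finset.Icc i (ℓ - 1), deltaM m x i j

/-- `degr(x) = degr⁺(x) + degr⁻(x)`. -/
def degr (ℓ m : ℕ) (x : ℕ → ℤ) : ℤ := degrP ℓ m x + degrM ℓ m x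

/-- Position coordinates `a_i = (m−x_0)+⋯+(m−x_{i−1})`, with the convention
`a_s = 0` for `s > ℓ`. -/
def dyckPos (ℓ m : ℕ) (x : ℕ → ℤ) (i : ℕ) : ℤ :=
  if i ≤ ℓ then (m : ℤ) * i - pSum x i else 0

/-- `area(x) = a_1 + ⋯ + a_ℓ = M − (ℓ·x_0 + ⋯ + 1·x_{ℓ−1})`. -/
def area (ℓ m : ℕ) (x : ℕ → ℤ) : ℤ := ∑ i ∈ Finset.Icc 1 ℓ, dyckPos ℓ m x i

/-- `point(x)`: the minimal `r ≤ ℓ` such that `a_r − a_ℓ > −m`. -/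
noncomputable def dyckPoint (ℓ m : ℕ) (x : ℕ → ℤ) : ℕ :=
  sInf {r : ℕ | -(m : ℤ) < dyckPos ℓ m x r - dyckPos ℓ m x ℓ}

/-- `pair(x)`: the minimal `r < ℓ` such that `a_r − a_{r+2} ≥ −m`. -/
noncomputable def dyckPair (ℓ m : ℕ) (x : ℕ → ℤ) : ℕ :=
  sInf {r : ℕ | r < ℓ ∧ -(m : ℤ) ≤ dyckPos ℓ m x r - dyckPos ℓ m x (r + 2)}

/-- `x` is rightable at `r`. -/
def RightableAt (ℓ m : ℕ) (x : ℕ → ℤ) (r : ℕ) : Prop :=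
  dyckPoint ℓ m x = r ∧ r < ℓ ∧
    ∀ i, i + 2 ≤ r → dyckPos ℓ m x i - dyckPos ℓ m x (i + 2) < -(m : ℤ)

/-- `x` is leftable at `r`. -/
def LeftableAt (ℓ m : ℕ) (x : ℕ → ℤ) (r : ℕ) : Prop :=
  dyckPair ℓ m x = r ∧ dyckPos ℓ m x (r + 1) - dyckPos ℓ m x ℓ ≤ (m : ℤ) + 1

/-- Reconstruct step coordinates from position coordinates:
`x_i = m + a_i − a_{i+1}` (with `a_{ℓ+1} = 0`), vanishing beyond `ℓ`. -/
def fromPos (ℓ m : ℕ) (a : ℕ → ℤ) : ℕ → ℤ :=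
  fun i => if i ≤ ℓ then (m : ℤ) + a i - a (i + 1) else 0

/-- Position coordinates of `cycleright(r,x)`:
`[a_0,…,a_r, a_ℓ+1, a_{r+1},…,a_{ℓ−1}]`. -/
def rightPosSeq (ℓ m : ℕ) (x : ℕ → ℤ) (r : ℕ) : ℕ → ℤ := fun i =>
  if i ≤ r then dyckPos ℓ m x i
  else if i = r + 1 then dyckPos ℓ m x ℓ + 1
  else if i ≤ ℓ then dyckPos ℓ m x (i - 1)
  else 0

/-- `right(x)` when `x` is rightable at `r`. -/
def rightMap (ℓ m : ℕ) (x : ℕ → ℤ) (r : ℕ) : ℕ → ℤ := fromPos ℓ m (rightPosSeq ℓ m x r)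

/-- Position coordinates of `cycleleft(r,x)`:
`[a_0,…,a_r, a_{r+2},…,a_ℓ, a_{r+1}−1]`. -/
def leftPosSeq (ℓ m : ℕ) (x : ℕ → ℤ) (r : ℕ) : ℕ → ℤ := fun i =>
  if i ≤ r then dyckPos ℓ m x i
  else if i < ℓ then dyckPos ℓ m x (i + 1)
  else if i = ℓ then dyckPos ℓ m x (r + 1) - 1
  else 0

/-- `left(x)` when `x` is leftable at `r`. -/
def leftMap (ℓ m : ℕ) (x : ℕ → ℤ) (r : ℕ) : ℕ → ℤ := fromPos ℓ m (leftPosSeq ℓ m x r)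

def Rightable (ℓ m : ℕ) (x : ℕ → ℤ) : Prop := ∃ r, RightableAt ℓ m x r

def Leftable (ℓ m : ℕ) (x : ℕ → ℤ) : Prop := ∃ r, LeftableAt ℓ m x r

/-- One application of `right` (meaningful when `x` is rightable). -/
noncomputable def rightStep (ℓ m : ℕ) (x : ℕ → ℤ) : ℕ → ℤ := rightMap ℓ m x (dyckPoint ℓ m x)

/-- One application of `left` (meaningful when `x` is leftable). -/
noncomputable def leftStep (ℓ m : ℕ) (x : ℕ → ℤ) : ℕ → ℤ := leftMap ℓ m x (dyckPair ℓ m x)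

/-- `y = lowest(x)`: `y = rightⁱ(x)` with all intermediate steps rightable and
`y` itself not rightable. -/
def IsLowestOf (ℓ m : ℕ) (x y : ℕ → ℤ) : Prop :=
  (∃ k, (∀ j < k, Rightable ℓ m ((rightStep ℓ m)^[j] x)) ∧ y = (rightStep ℓ m)^[k] x) ∧
    ¬ Rightable ℓ m y

/-- `x` is disconnected: some `leftⁱ(x)` is a Dyck path that is not leftable. -/
def Disconnected (ℓ m : ℕ) (x : ℕ → ℤ) : Prop :=
  ∃ i, IsDyck ℓ m ((leftStep ℓ m)^[i] x) ∧ ¬ Leftable ℓ m ((leftStep ℓ m)^[i] x)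

def ConnectedPath (ℓ m : ℕ) (x : ℕ → ℤ) : Prop := ¬ Disconnected ℓ m x

/-- `string(v₀) = {rightⁱ(v₀) : 0 ≤ i ≤ b}` where `right^b(v₀) = lowest(v₀)`. -/
def stringSet (ℓ m : ℕ) (v0 : ℕ → ℤ) : Set (ℕ → ℤ) :=
  {y | ∃ i, (∀ j < i, Rightable ℓ m ((rightStep ℓ m)^[j] v0)) ∧ y = (rightStep ℓ m)^[i] v0}

/-- A matrix in `𝐌_{m×ℓ}`, encoded as `M : ℕ → ℕ → Option Bool`
(`some false` = 0, `some true` = 1, `none` = ∗; entries outside the `m×ℓ`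
range are normalized to `none`). -/
def IsGoodMatrix (m ℓ : ℕ) (M : ℕ → ℕ → Option Bool) : Prop :=
  (∀ i j, m ≤ i ∨ ℓ ≤ j → M i j = none) ∧
  (∀ i j i' j', i < m → j < ℓ → i' < m → j' < ℓ → M i j = none →
    (i < i' ∨ (i = i' ∧ j < j')) → M i' j' = none) ∧
  M 0 0 = some false ∧
  (∀ i j, i < m → j < ℓ → M i j ≠ none →
    (M i j = some true ∨
      ∃ i' j', i' < m ∧ j' < ℓ ∧ (i < i' ∨ (i = i' ∧ j < j')) ∧ M i' j' ≠ none)) ∧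
  (∀ i j, M i j = some false → M (i + 1) j ≠ some true)

/-- `|M|`: the number of `(0,1)` pairs of entries of `M` in contact. -/
def contactCount (m ℓ : ℕ) (M : ℕ → ℕ → Option Bool) : ℕ :=
  (((Finset.range m ×ˢ Finset.range ℓ) ×ˢ (Finset.range m ×ˢ Finset.range ℓ)).filter
    fun p => M p.1.1 p.1.2 = some false ∧ M p.2.1 p.2.2 = some true ∧
      ((p.2.1 = p.1.1 ∧ p.1.2 < p.2.2) ∨ (p.2.1 = p.1.1 + 1 ∧ p.2.2 ≤ p.1.2))).card

/-- `h(M)`: the number of `0` entries of `M`. -/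
def zeroCount (m ℓ : ℕ) (M : ℕ → ℕ → Option Bool) : ℕ :=
  ((Finset.range m ×ˢ Finset.range ℓ).filter fun p => M p.1 p.2 = some false).card

/-- `w(M)`: the number of `1` entries of `M`. -/
def oneCount (m ℓ : ℕ) (M : ℕ → ℕ → Option Bool) : ℕ :=
  ((Finset.range m ×ˢ Finset.range ℓ).filter fun p => M p.1 p.2 = some true).card

/-- A partition with all parts ≤ `b`, as a weakly decreasing list of positive
integers. -/
def IsPartitionList (b : ℕ) (L : List ℕ) : Prop :=
  L.Pairwise (· ≥ ·) ∧ ∀ p ∈ L, 0 < p ∧ p ≤ b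

/-- The `(ℓ−1)`-width `w^{ℓ−1}(λ)`: the sum of the lengths of the
`(ℓ−1)`-hook rows of `λ` (row 1 is a hook row; if row `i` is a hook row, so is
row `i + ℓ − λ_i`). -/
def hookWidth (ℓ : ℕ) : List ℕ → ℕ
  | [] => 0
  | p :: rest => p + hookWidth ℓ (rest.drop (ℓ - p - 1))
  termination_by L => L.length
  decreasing_by
    simp only [List.length_drop, List.length_cons]
    omega

/-- The number of `1` entries in column `j` of `M`. -/
def colOnes (m : ℕ) (M : ℕ → ℕ → Option Bool) (j : ℕ) : ℕ :=
  ((Finset.range m).filter fun i => M i j = some true).card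

/-- The map `f`: the path with position coordinates `[0,a_1,…,a_ℓ]` where `a_j`
is the number of `1` entries in column `j` of `M`. -/
def pathOfMatrix (ℓ m : ℕ) (M : ℕ → ℕ → Option Bool) : ℕ → ℤ :=
  fromPos ℓ m fun i => if i = 0 then 0 else if i ≤ ℓ then (colOnes m M (i - 1) : ℤ) else 0

/-- The number of `1` entries in contact with the `0` entry at `(i,j)`. -/
def zContacts (m ℓ : ℕ) (M : ℕ → ℕ → Option Bool) (i j : ℕ) : ℕ :=
  ((Finset.range m ×ˢ Finset.range ℓ).filter
    fun q => M q.1 q.2 = some true ∧ ((q.1 = i ∧ j < q.2) ∨ (q.1 = i + 1 ∧ q.2 ≤ j))).card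

/-- The number of `0` entries strictly before `(i,j)` in row-reading order. -/
def zIndex (m ℓ : ℕ) (M : ℕ → ℕ → Option Bool) (i j : ℕ) : ℕ :=
  ((Finset.range m ×ˢ Finset.range ℓ).filter
    fun q => M q.1 q.2 = some false ∧ (q.1 < i ∨ (q.1 = i ∧ q.2 < j))).card

/-- `M` realizes the partition `L`: the `i`-th `0` entry of `M` in row-reading
order is in contact with exactly `L_i` entries equal to `1`. -/
def MatRealizes (m ℓ : ℕ) (M : ℕ → ℕ → Option Bool) (L : List ℕ) : Prop :=
  zeroCount m ℓ M = L.length ∧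
  ∀ i j, i < m → j < ℓ → M i j = some false →
    zContacts m ℓ M i j = L.getD (zIndex m ℓ M i j) 0

/-- `x = f(g(L))` for the bijections `f`, `g` (characterized relationally). -/
def IsFG (ℓ m : ℕ) (L : List ℕ) (x : ℕ → ℤ) : Prop :=
  ∃ M, IsGoodMatrix m ℓ M ∧ contactCount m ℓ M < (ℓ - 1) * m ∧ MatRealizes m ℓ M L ∧
    x = pathOfMatrix ℓ m M

/-- The partition with `p i` parts of size `ℓ−1−i`, for `0 ≤ i ≤ ℓ−2`. -/
def partitionOfCounts (ℓ : ℕ) (p : ℕ → ℕ) : List ℕ :=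
  (List.range (ℓ - 1)).flatMap fun i => List.replicate (p i) (ℓ - 1 - i)

/-- `M = m·ℓ(ℓ+1)/2`, the maximal possible area. -/
def MVal (ℓ m : ℕ) : ℕ := m * ℓ * (ℓ + 1) / 2

/-- The predicate `extendable(ℓ,m,d)`. -/
def Extendable (ℓ m : ℕ) (d : ℤ) : Prop :=
  ∃ ext : List ℕ → Set (ℕ → ℤ),
    (∀ L, IsPartitionList (ℓ - 1) L → (L.sum : ℤ) = d →
      (ext L ⊆ {w | IsDyck ℓ m w ∧ degr ℓ m w = d ∧ Disconnected ℓ m w}) ∧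
      (∀ w w', w ∈ ext L → w' ∈ ext L → area ℓ m w = area ℓ m w' → w = w') ∧
      (∀ v0, IsFG ℓ m L v0 → ∀ vs, IsLowestOf ℓ m v0 vs →
        area ℓ m vs ≤ (MVal ℓ m : ℤ) - L.sum - L.length ∧
        ∀ a : ℤ, (area ℓ m vs < a ∧ a ≤ (MVal ℓ m : ℤ) - L.sum - L.length) ↔
          ∃ w ∈ ext L, area ℓ m w = a)) ∧
    ({w | IsDyck ℓ m w ∧ degr ℓ m w = d ∧ Disconnected ℓ m w} =
      ⋃ L ∈ {L : List ℕ | IsPartitionList (ℓ - 1) L ∧ (L.sum : ℤ) = d}, ext L) ∧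
    (∀ L L', IsPartitionList (ℓ - 1) L → (L.sum : ℤ) = d →
      IsPartitionList (ℓ - 1) L' → (L'.sum : ℤ) = d → L ≠ L' → ext L ∩ ext L' = ∅)


/-- Auxiliary: shifting an `Icc` sum down by one. -/
lemma sum_Icc_shift (f : ℕ → ℤ) (i j : ℕ) (hi : 1 ≤ i) (hj : 1 ≤ j) :
    ∑ k ∈ Finset.Icc i j, f k = ∑ k ∈ Finset.Icc (i-1) (j-1), f (k+1) := by
  have h : Finset.Icc i j = (Finset.Icc (i-1) (j-1)).map (addRightEmbedding 1) := by
    rw [Finset.map_add_right_Icc]; congr 1 <;> omega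
  rw [h, Finset.sum_map]; rfl

/-- Claim `fitsout`: prepending a step coordinate `x₀ ≤ m` to an
`(ℓ−1,m)`-Dyck path `(x_1,…,x_ℓ)` (and adjusting the last coordinate) yields an
`(ℓ,m)`-Dyck path `x'` with `degr(x') ≤ x₀(ℓ−1) + degr(x)`. -/
theorem statement0 (ℓ m : ℕ) (hm : 1 ≤ m) (hl : 2 ≤ ℓ) (y : ℕ → ℤ)
    (hy : IsDyck (ℓ - 1) m y) (c : ℤ) (hc0 : 0 ≤ c) (hcm : c ≤ (m : ℤ))
    (x' : ℕ → ℤ)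
    (hx' : x' = fun i => if i = 0 then c else if i < ℓ then y (i - 1)
      else if i = ℓ then (m : ℤ) * ((ℓ : ℤ) + 1) - (c + ∑ k ∈ Finset.range (ℓ - 1), y k)
      else 0) :
    IsDyck ℓ m x' ∧ degr ℓ m x' ≤ c * ((ℓ : ℤ) - 1) + degr (ℓ - 1) m y := by
  obtain ⟨hy0, hyp, hyt, hyv⟩ := hy
  have hx0 : x' 0 = c := by rw [hx']; simp
  have hval : ∀ k, 1 ≤ k → k ≤ ℓ - 1 → x' k = y (k - 1) := by
    intro k h1 h2
    rw [hx']; simp only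
    rw [if_neg (by omega), if_pos (by omega)]
  have hxl : x' ℓ = (m : ℤ) * ((ℓ : ℤ) + 1) - (c + pSum y (ℓ - 1)) := by
    rw [hx']; simp only
    rw [if_neg (by omega), if_neg (by omega)]
    simp [pSum]
  have hxv : ∀ i, ℓ < i → x' i = 0 := by
    intro i hi
    rw [hx']; simp only
    rw [if_neg (by omega), if_neg (by omega), if_neg (by omega)]
  -- total of y
  have hytot : pSum y ℓ = (m : ℤ) * ℓ := by
    have e1 : ℓ - 1 + 1 = ℓ := by omega
    have e2 : ((ℓ - 1 : ℕ) : ℤ) + 1 = (ℓ : ℤ) := by omega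
    rw [e1, e2] at hyt; exact hyt
  -- partial sum bound for y
  have hypb0 : ∀ i, i ≤ ℓ - 1 → pSum y i ≤ (m : ℤ) * i := by
    intro i h2
    rcases Nat.eq_zero_or_pos i with h | h
    · subst h; simp [pSum]
    · have h := hyp (i - 1) (by omega)
      have e1 : i - 1 + 1 = i := by omega
      have e2 : ((i - 1 : ℕ) : ℤ) + 1 = (i : ℤ) := by omega
      rw [e1, e2] at h; exact h
  have hsplit : pSum y ℓ = pSum y (ℓ - 1) + y (ℓ - 1) := by
    have e1 : ℓ = ℓ - 1 + 1 := by omega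
    rw [e1]; exact Finset.sum_range_succ y (ℓ - 1)
  have hyl : pSum y (ℓ - 1) ≤ (m : ℤ) * ℓ := by
    have := hy0 (ℓ - 1); linarith [hytot ▸ hsplit]
  -- partial sums of x'
  have hpx : ∀ n, n ≤ ℓ - 1 → pSum x' (n + 1) = c + pSum y n := by
    intro n hn
    unfold pSum
    rw [Finset.sum_range_succ' x' n]
    have h1 : ∀ k ∈ Finset.range n, x' (k + 1) = y k := by
      intro k hk
      rw [Finset.mem_range] at hk
      rw [hval (k + 1) (by omega) (by omega)]
      simp
    rw [Finset.sum_congr rfl h1, hx0, add_comm]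
  have hxl0 : 0 ≤ x' ℓ := by rw [hxl]; linarith
  have hDyck : IsDyck ℓ m x' := by
    refine ⟨?_, ?_, ?_, hxv⟩
    · intro i
      rcases Nat.lt_trichotomy i ℓ with h | h | h
      · rcases Nat.eq_zero_or_pos i with h0 | h0
        · subst h0; rw [hx0]; exact hc0
        · rw [hval i (by omega) (by omega)]; exact hy0 _
      · subst h; exact hxl0
      · rw [hxv i h]
    · intro i hi
      rw [hpx i (by omega)]
      have h1 := hypb0 i (by omega)
      have h2 : (m : ℤ) * ((i : ℤ) + 1) = (m : ℤ) * i + m := by ring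
      linarith
    · have e1 : ℓ + 1 = (ℓ - 1 + 1) + 1 := by omega
      rw [e1]
      unfold pSum
      rw [Finset.sum_range_succ]
      have e2 : ℓ - 1 + 1 = ℓ := by omega
      have h3 : ∑ k ∈ Finset.range (ℓ - 1 + 1), x' k = c + pSum y (ℓ - 1) := hpx (ℓ - 1) le_rfl
      rw [h3, e2, hxl]; ring
  refine ⟨hDyck, ?_⟩
  -- sums over Icc for x' vs y
  have hsumP : ∀ i j, 1 ≤ i → 1 ≤ j → j ≤ ℓ - 1 →
      ∑ k ∈ Finset.Icc i j, (x' k - (m : ℤ)) = ∑ k ∈ Finset.Icc (i-1) (j-1), (y k - (m : ℤ)) := by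
    intro i j h1 h2 h3
    rw [sum_Icc_shift (fun k => x' k - (m : ℤ)) i j h1 h2]
    refine Finset.sum_congr rfl ?_
    intro k hk
    rw [Finset.mem_Icc] at hk
    rw [hval (k + 1) (by omega) (by omega), Nat.add_sub_cancel]
  have hsumM : ∀ i j, 1 ≤ i → 1 ≤ j → j ≤ ℓ - 1 →
      ∑ k ∈ Finset.Icc i j, ((m : ℤ) - x' k) = ∑ k ∈ Finset.Icc (i-1) (j-1), ((m : ℤ) - y k) := by
    intro i j h1 h2 h3
    rw [sum_Icc_shift (fun k => (m : ℤ) - x' k) i j h1 h2]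
    refine Finset.sum_congr rfl ?_
    intro k hk
    rw [Finset.mem_Icc] at hk
    rw [hval (k + 1) (by omega) (by omega), Nat.add_sub_cancel]
  have hdP : ∀ i j, 1 ≤ i → i ≤ j → j ≤ ℓ - 1 →
      deltaP m x' i j = deltaP m y (i-1) (j-1) := by
    intro i j h1 h2 h3
    unfold deltaP
    rw [hval i h1 (le_trans h2 h3), hsumP i j h1 (by omega) h3]
  have hdM : ∀ i j, 2 ≤ i → i ≤ j → j ≤ ℓ - 1 →
      deltaM m x' i j = deltaM m y (i-1) (j-1) := by
    intro i j h1 h2 h3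
    unfold deltaM
    rw [hval (i - 1) (by omega) (by omega), hsumM i j (by omega) (by omega) h3]
  -- delta P at i = 1 vanishes
  have hdP1 : ∀ j, 1 ≤ j → j ≤ ℓ - 1 → deltaP m x' 1 j = 0 := by
    intro j h1 h2
    unfold deltaP
    have hIcc : Finset.Icc (1-1) (j-1) = Finset.range j := by
      ext k; rw [Finset.mem_Icc, Finset.mem_range]; omega
    have hs : ∑ k ∈ Finset.Icc 1 j, (x' k - (m : ℤ)) = pSum y j - (m : ℤ) * j := by
      rw [hsumP 1 j le_rfl h1 h2, hIcc, Finset.sum_sub_distrib, Finset.sum_const,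
        Finset.card_range, nsmul_eq_mul]
      unfold pSum; ring
    rw [hs]
    have hb := hypb0 j h2
    rw [max_eq_left (by linarith)]
    rw [hval 1 le_rfl (by omega)]
    exact min_eq_right (hy0 _)
  -- delta M at i = 1 is at most c
  have hdM1 : ∀ j, deltaM m x' 1 j ≤ c := by
    intro j
    unfold deltaM
    have e : (1 : ℕ) - 1 = 0 := rfl
    rw [e, hx0]
    exact min_le_left _ _
  -- split the sums
  have hL1 : Finset.Icc 1 (ℓ-1) = insert 1 (Finset.Icc 2 (ℓ-1)) := by
    ext k; rw [Finset.mem_insert, Finset.mem_Icc, Finset.mem_Icc]; omega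
  have hnot : (1:ℕ) ∉ Finset.Icc 2 (ℓ-1) := by simp
  have hPtail : ∑ i ∈ Finset.Icc 2 (ℓ-1), ∑ j ∈ Finset.Icc i (ℓ-1), deltaP m x' i j
      = degrP (ℓ-1) m y := by
    rw [sum_Icc_shift (fun i => ∑ j ∈ Finset.Icc i (ℓ-1), deltaP m x' i j) 2 (ℓ-1)
      (by omega) (by omega)]
    unfold degrP
    refine Finset.sum_congr rfl ?_
    intro i hi
    rw [Finset.mem_Icc] at hi
    rw [sum_Icc_shift (fun j => deltaP m x' (i+1) j) (i+1) (ℓ-1) (by omega) (by omega)]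
    have e : i + 1 - 1 = i := by omega
    rw [e]
    refine Finset.sum_congr rfl ?_
    intro j hj
    rw [Finset.mem_Icc] at hj
    rw [hdP (i+1) (j+1) (by omega) (by omega) (by omega)]
    congr 1 <;> omega
  have hMtail : ∑ i ∈ Finset.Icc 2 (ℓ-1), ∑ j ∈ Finset.Icc i (ℓ-1), deltaM m x' i j
      = degrM (ℓ-1) m y := by
    rw [sum_Icc_shift (fun i => ∑ j ∈ Finset.Icc i (ℓ-1), deltaM m x' i j) 2 (ℓ-1)
      (by omega) (by omega)]
    unfold degrM
    refine Finset.sum_congr rfl ?_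
    intro i hi
    rw [Finset.mem_Icc] at hi
    rw [sum_Icc_shift (fun j => deltaM m x' (i+1) j) (i+1) (ℓ-1) (by omega) (by omega)]
    have e : i + 1 - 1 = i := by omega
    rw [e]
    refine Finset.sum_congr rfl ?_
    intro j hj
    rw [Finset.mem_Icc] at hj
    rw [hdM (i+1) (j+1) (by omega) (by omega) (by omega)]
    congr 1 <;> omega
  have hPhead : ∑ j ∈ Finset.Icc 1 (ℓ-1), deltaP m x' 1 j = 0 := by
    refine Finset.sum_eq_zero ?_
    intro j hj
    rw [Finset.mem_Icc] at hj
    exact hdP1 j hj.1 hj.2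
  have hMhead : ∑ j ∈ Finset.Icc 1 (ℓ-1), deltaM m x' 1 j ≤ c * ((ℓ : ℤ) - 1) := by
    calc ∑ j ∈ Finset.Icc 1 (ℓ-1), deltaM m x' 1 j
        ≤ ∑ _j ∈ Finset.Icc 1 (ℓ-1), c := Finset.sum_le_sum (fun j _ => hdM1 j)
      _ = c * ((ℓ : ℤ) - 1) := by
          rw [Finset.sum_const, Nat.card_Icc, nsmul_eq_mul]
          have : ((ℓ - 1 + 1 - 1 : ℕ) : ℤ) = (ℓ : ℤ) - 1 := by omega
          rw [this]; ring
  have hP : degrP ℓ m x' = degrP (ℓ-1) m y := by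
    unfold degrP
    rw [hL1, Finset.sum_insert hnot, hPhead, hPtail, zero_add]
    rfl
  have hM : degrM ℓ m x' ≤ c * ((ℓ : ℤ) - 1) + degrM (ℓ-1) m y := by
    unfold degrM
    rw [hL1, Finset.sum_insert hnot, hMtail]
    exact add_le_add_left hMhead _
  unfold degr
  linarith
end

section
/- Let m ≥ 1, ℓ ≥ 2, let x = (x_0,…,x_ℓ) be an (ℓ,m)-Dyck path, and let 1 ≤ j ≤ ℓ−1. Then ε⁺_{1j}(x)+ε⁺_{2j}(x)+⋯+ε⁺_{jj}(x) = δ⁺_{1j}(x)+δ⁺_{2j}(x)+⋯+δ⁺_{jj}(x), and ε⁻_{1j}(x)+ε⁻_{2j}(x)+⋯+ε⁻_{jj}(x) − ε⁰_{0j}(x) = δ⁻_{1j}(x)+δ⁻_{2j}(x)+⋯+δ⁻_{jj}(x). -/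
open Finset

/-- `ε⁺_{ij}(x) = min(m, max(0, (x_i−m)+⋯+(x_j−m)−1))`. -/
def epsP (m : ℕ) (x : ℕ → ℤ) (i j : ℕ) : ℤ :=
  min (m : ℤ) (max 0 ((∑ k ∈ Finset.Icc i j, (x k - (m : ℤ))) - 1))

/-- `ε⁻_{ij}(x) = min(m, max(0, (m−x_i)+⋯+(m−x_j)))`. -/
def epsM (m : ℕ) (x : ℕ → ℤ) (i j : ℕ) : ℤ :=
  min (m : ℤ) (max 0 (∑ k ∈ Finset.Icc i j, ((m : ℤ) - x k)))

/-- `ε⁰_{ij}(x) = max(0, (m−x_i)+⋯+(m−x_j)−m)`. -/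
def eps0 (m : ℕ) (x : ℕ → ℤ) (i j : ℕ) : ℤ :=
  max 0 ((∑ k ∈ Finset.Icc i j, ((m : ℤ) - x k)) - (m : ℤ))


private lemma icc_bot_aux (f : ℕ → ℤ) (a b : ℕ) (h : a ≤ b) :
    ∑ k ∈ Finset.Icc a b, f k = f a + ∑ k ∈ Finset.Icc (a+1) b, f k := by
  rw [Finset.Icc_add_one_left_eq_Ioc, ← Finset.Ioc_insert_left h, Finset.sum_insert left_notMem_Ioc]


private lemma tele_aux (f g : ℕ → ℤ) (j : ℕ)
    (h : ∀ i, 1 ≤ i → i ≤ j → f i = g (i+1) - g i) :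
    ∑ i ∈ Finset.Icc 1 j, f i = g (j+1) - g 1 := by
  induction j with
  | zero => simp
  | succ n ih =>
    rw [Finset.sum_Icc_succ_top (by omega : 1 ≤ n+1),
      ih (fun i h1 h2 => h i h1 (by omega)), h (n+1) (by omega) le_rfl]
    ring

/-- Claim `epsi`: for an `(ℓ,m)`-Dyck path `x` and `1 ≤ j ≤ ℓ−1`,
`Σ_{i=1}^{j} ε⁺_{ij} = Σ_{i=1}^{j} δ⁺_{ij}` and
`Σ_{i=1}^{j} ε⁻_{ij} − ε⁰_{0j} = Σ_{i=1}^{j} δ⁻_{ij}`. -/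
theorem statement2 (ℓ m : ℕ) (hm : 1 ≤ m) (hl : 2 ≤ ℓ) (x : ℕ → ℤ)
    (hx : IsDyck ℓ m x) (j : ℕ) (hj1 : 1 ≤ j) (hj2 : j ≤ ℓ - 1) :
    (∑ i ∈ Finset.Icc 1 j, epsP m x i j = ∑ i ∈ Finset.Icc 1 j, deltaP m x i j) ∧
    ((∑ i ∈ Finset.Icc 1 j, epsM m x i j) - eps0 m x 0 j =
      ∑ i ∈ Finset.Icc 1 j, deltaM m x i j) := by
  obtain ⟨hpos, hle, -, -⟩ := hx
  set S : ℕ → ℤ := fun i => ∑ k ∈ Finset.Icc i j, (x k - (m:ℤ)) with hSdef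
  set U : ℕ → ℤ := fun i => ∑ k ∈ Finset.Icc i j, ((m:ℤ) - x k) with hUdef
  have hS : ∀ i, i ≤ j → S i = (x i - m) + S (i+1) := fun i h => icc_bot_aux _ i j h
  have hU : ∀ i, i ≤ j → U i = ((m:ℤ) - x i) + U (i+1) := fun i h => icc_bot_aux _ i j h
  have hSj : S (j+1) = 0 := by simp [hSdef]
  have hUj : U j = (m:ℤ) - x j := by simp [hUdef]
  have hsum : pSum x (j+1) = x 0 + ∑ k ∈ Finset.Icc 1 j, x k := by
    rw [pSum, Finset.range_eq_Ico, Finset.Ico_add_one_right_eq_Icc]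
    exact icc_bot_aux x 0 j (by omega)
  have hS1 : S 1 ≤ (m:ℤ) := by
    have h1 := hle j (by omega)
    rw [hsum] at h1
    have h2 : S 1 = (∑ k ∈ Finset.Icc 1 j, x k) - (m:ℤ) * j := by
      simp [hSdef, Finset.sum_sub_distrib, mul_comm]
    have h0 := hpos 0
    have hr : (m:ℤ) * (↑j + 1) = (m:ℤ) * j + m := by ring
    linarith
  set F : ℕ → ℤ := fun i => max 0 (S i - 1 - (m:ℤ)) with hFdef
  set G : ℕ → ℤ := fun i => max 0 (U i - (m:ℤ)) with hGdef
  have hFj : F (j+1) = 0 := by simp only [hFdef, hSj]; omega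
  have hF1 : F 1 = 0 := by simp only [hFdef]; omega
  have hGj : G j = 0 := by have := hpos j; simp only [hGdef, hUj]; omega
  have hG0 : G 0 = eps0 m x 0 j := by simp [hGdef, hUdef, eps0]
  constructor
  · rw [← sub_eq_zero, ← Finset.sum_sub_distrib,
      tele_aux _ F j (fun i hi1 hi2 => ?_), hFj, hF1, sub_zero]
    have h1 := hS i hi2
    have h2 := hpos i
    simp only [epsP, deltaP, hFdef, hSdef] at h1 ⊢
    omega
  · rw [sub_eq_iff_eq_add, ← sub_eq_iff_eq_add', ← Finset.sum_sub_distrib,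
      tele_aux _ (fun i => -G (i-1)) j (fun i hi1 hi2 => ?_)]
    · simp only [Nat.add_sub_cancel]
      rw [hGj, hG0]
      ring
    · have h5 : i - 1 + 1 = i := by omega
      have h1 := hU (i-1) (by omega)
      rw [h5] at h1
      have h2 := hpos (i-1)
      simp only [Nat.add_sub_cancel, epsM, deltaM, hGdef, hUdef] at h1 ⊢
      omega
end

section
/- Let m ≥ 1, ℓ ≥ 2, and let x = (x_0,…,x_ℓ) be a sequence of nonnegative integers. If x_1+x_2+⋯+x_{ℓ−1} ≤ (ℓ−2)m and x_0+x_1 ≥ m, then degr⁻(x) ≥ (ℓ−2)m. -/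
open Finset

namespace Statement3Aux

variable (m : ℕ) (x : ℕ → ℤ)

def Sq (j : ℕ) : ℤ := ∑ k ∈ Finset.Icc 1 j, ((m : ℤ) - x k)

def gg (i : ℕ) (s : ℤ) : ℤ := min (x i) (max 0 (s - Sq m x i))

lemma Sq_zero : Sq m x 0 = 0 := by simp [Sq]

lemma Sq_one : Sq m x 1 = (m : ℤ) - x 1 := by simp [Sq]

lemma Sq_succ (j : ℕ) : Sq m x (j + 1) = Sq m x j + ((m : ℤ) - x (j + 1)) :=
  Finset.sum_Icc_succ_top (by omega) _

lemma Ssplit (i : ℕ) : ∀ j, i ≤ j →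
    (∑ k ∈ Finset.Icc (i + 1) j, ((m : ℤ) - x k)) = Sq m x j - Sq m x i := by
  intro j hj
  induction j, hj using Nat.le_induction with
  | base => rw [Finset.Icc_eq_empty (by omega)]; simp
  | succ j hj ih =>
      rw [Finset.sum_Icc_succ_top (by omega : i + 1 ≤ j + 1), ih, Sq_succ]; ring

lemma gg_nonneg (hpos : ∀ i, 0 ≤ x i) (i : ℕ) (s : ℤ) : 0 ≤ gg m x i s := le_min (hpos i) (le_max_left _ _)

lemma gg_mono (i : ℕ) {s s' : ℤ} (h : s ≤ s') : gg m x i s ≤ gg m x i s' :=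
  min_le_min le_rfl (max_le_max le_rfl (by omega))

lemma cover (hpos : ∀ i, 0 ≤ x i) (h2 : (m : ℤ) ≤ x 0 + x 1) {s : ℤ} (hs : s ≤ m) :
    s ≤ gg m x 0 s + gg m x 1 s := by
  have h0 := hpos 0; have h1 := hpos 1
  unfold gg
  rw [Sq_zero, Sq_one]
  simp only [min_def, max_def]
  split_ifs <;> omega

lemma ld1 (hpos : ∀ i, 0 ≤ x i) (h2 : (m : ℤ) ≤ x 0 + x 1) {J : ℕ} (hJ : 1 ≤ J) {s : ℤ} (hs : s ≤ m) :
    s ≤ ∑ i ∈ Finset.range (J + 1), gg m x i s := by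
  have hle : ∑ i ∈ Finset.range 2, gg m x i s ≤ ∑ i ∈ Finset.range (J + 1), gg m x i s :=
    Finset.sum_le_sum_of_subset_of_nonneg (Finset.range_subset_range.mpr (by omega))
      (fun i _ _ => gg_nonneg m x hpos i s)
  have h2' : gg m x 0 s + gg m x 1 s = ∑ i ∈ Finset.range 2, gg m x i s := by
    rw [Finset.sum_range_succ, Finset.sum_range_one]
  have := cover m x hpos h2 hs
  linarith

lemma ld2 (hpos : ∀ i, 0 ≤ x i) : ∀ k, 1 ≤ k → ∀ s : ℤ, s ≤ m →
    s - Sq m x k ≤ ∑ i ∈ Finset.range (k + 1), gg m x i s := by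
  intro k hk
  induction k, hk using Nat.le_induction with
  | base =>
      intro s hs
      rw [Finset.sum_range_succ, Finset.sum_range_one]
      have h0 : 0 ≤ gg m x 0 s := gg_nonneg m x hpos 0 s
      have h1 := hpos 1
      have : s - Sq m x 1 ≤ gg m x 1 s := by
        unfold gg
        rw [Sq_one]
        simp only [min_def, max_def]
        split_ifs <;> omega
      linarith
  | succ k hk ih =>
      intro s hs
      rw [Finset.sum_range_succ]
      have hSq := Sq_succ m x k
      rcases le_or_gt (s - Sq m x (k + 1)) (x (k + 1)) with hc | hc
      · have hg : s - Sq m x (k + 1) ≤ gg m x (k + 1) s :=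
          le_min hc (le_max_right _ _)
        have hsum : 0 ≤ ∑ i ∈ Finset.range (k + 1), gg m x i s :=
          Finset.sum_nonneg fun i _ => gg_nonneg m x hpos i s
        linarith
      · have hg : x (k + 1) ≤ gg m x (k + 1) s :=
          le_min le_rfl (hc.le.trans (le_max_right _ _))
        have hih := ih s hs
        have hm : (0 : ℤ) ≤ (m : ℤ) := Int.natCast_nonneg m
        linarith

lemma col_eq (j : ℕ) :
    ∑ i ∈ Finset.Icc 1 j, deltaM m x i j
      = ∑ i ∈ Finset.range j, gg m x i (Sq m x j) := by
  rw [← Finset.Ico_add_one_right_eq_Icc, Finset.sum_Ico_eq_sum_range]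
  refine Finset.sum_congr rfl fun i hi => ?_
  have hij : i < j := Finset.mem_range.mp hi
  have h1i : 1 + i = i + 1 := Nat.add_comm 1 i
  rw [h1i]
  unfold deltaM gg
  rw [Nat.add_sub_cancel, Ssplit m x i j hij.le]

lemma inv (hpos : ∀ i, 0 ≤ x i) (h2 : (m : ℤ) ≤ x 0 + x 1) : ∀ J : ℕ, 1 ≤ J →
    (J : ℤ) * m ≤ (∑ j ∈ Finset.Icc 1 J, ∑ i ∈ Finset.range j, gg m x i (Sq m x j))
      + ∑ i ∈ Finset.range (J + 1), gg m x i (m : ℤ) := by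
  intro J hJ
  induction J, hJ using Nat.le_induction with
  | base =>
      simp only [Finset.Icc_self, Finset.sum_singleton, Finset.sum_range_succ,
        Finset.sum_range_one, Finset.sum_range_zero, Nat.cast_one, one_mul, zero_add]
      have hc := cover m x hpos h2 (le_refl (m : ℤ))
      have h0 : 0 ≤ gg m x 0 (Sq m x 1) := gg_nonneg m x hpos 0 _
      linarith
  | succ J hJ ih =>
      rw [Finset.sum_Icc_succ_top (by omega : 1 ≤ J + 1), Finset.sum_range_succ (n := J + 1)]
      have star : (m : ℤ) ≤ (∑ i ∈ Finset.range (J + 1), gg m x i (Sq m x (J + 1)))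
          + gg m x (J + 1) (m : ℤ) := by
        rcases le_or_gt (m : ℤ) (Sq m x (J + 1)) with hc | hc
        · have hmono : ∑ i ∈ Finset.range (J + 1), gg m x i (m : ℤ)
              ≤ ∑ i ∈ Finset.range (J + 1), gg m x i (Sq m x (J + 1)) :=
            Finset.sum_le_sum fun i _ => gg_mono m x i hc
          have hb := ld1 m x hpos h2 hJ (le_refl (m : ℤ))
          have hg : 0 ≤ gg m x (J + 1) (m : ℤ) := gg_nonneg m x hpos _ _
          linarith
        · rcases le_or_gt ((m : ℤ) - Sq m x (J + 1)) (x (J + 1)) with hd | hd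
          · have hgb : (m : ℤ) - Sq m x (J + 1) ≤ gg m x (J + 1) (m : ℤ) :=
              le_min hd (le_max_right _ _)
            have hb := ld1 m x hpos h2 hJ hc.le
            linarith
          · have hx : x (J + 1) ≤ gg m x (J + 1) (m : ℤ) :=
              le_min le_rfl (hd.le.trans (le_max_right _ _))
            have hb := ld2 m x hpos J hJ (Sq m x (J + 1)) hc.le
            have hSq := Sq_succ m x J
            linarith
      push_cast
      linarith

end Statement3Aux

/-- Claim `bound1`: if `x_1+⋯+x_{ℓ−1} ≤ (ℓ−2)m` and `x_0+x_1 ≥ m` then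
`degr⁻(x) ≥ (ℓ−2)m`. -/
theorem statement3 (ℓ m : ℕ) (hm : 1 ≤ m) (hl : 2 ≤ ℓ) (x : ℕ → ℤ)
    (hpos : ∀ i, 0 ≤ x i)
    (h1 : ∑ k ∈ Finset.Icc 1 (ℓ - 1), x k ≤ ((ℓ : ℤ) - 2) * m)
    (h2 : (m : ℤ) ≤ x 0 + x 1) :
    ((ℓ : ℤ) - 2) * m ≤ degrM ℓ m x := by
  -- reduce to the auxiliary machinery
  open Statement3Aux in
  rcases eq_or_lt_of_le hl with h2l | h3l
  · -- ℓ = 2 : target is 0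
    have hz : ((ℓ : ℤ) - 2) * m = 0 := by rw [← h2l]; ring
    rw [hz]
    refine Finset.sum_nonneg fun i _ => Finset.sum_nonneg fun j _ => ?_
    exact le_min (hpos _) (le_max_left _ _)
  · have hl3 : 3 ≤ ℓ := h3l
    set L := ℓ - 1 with hLdef
    have hL2 : 2 ≤ L := by omega
    have hswap : degrM ℓ m x = ∑ j ∈ Finset.Icc 1 L, ∑ i ∈ Finset.Icc 1 j, deltaM m x i j := by
      unfold degrM
      have := Finset.sum_Ico_Ico_comm 1 (L + 1) (fun i j => deltaM m x i j)
      simpa [Finset.Ico_add_one_right_eq_Icc] using this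
    have hcols : degrM ℓ m x
        = ∑ j ∈ Finset.Icc 1 L, ∑ i ∈ Finset.range j, Statement3Aux.gg m x i (Statement3Aux.Sq m x j) := by
      rw [hswap]
      exact Finset.sum_congr rfl fun j _ => Statement3Aux.col_eq m x j
    have hLsucc : L = (L - 1) + 1 := by omega
    have hsplit : ∑ j ∈ Finset.Icc 1 L, ∑ i ∈ Finset.range j, Statement3Aux.gg m x i (Statement3Aux.Sq m x j)
        = (∑ j ∈ Finset.Icc 1 (L - 1), ∑ i ∈ Finset.range j, Statement3Aux.gg m x i (Statement3Aux.Sq m x j))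
          + ∑ i ∈ Finset.range L, Statement3Aux.gg m x i (Statement3Aux.Sq m x L) := by
      conv_lhs => rw [hLsucc]
      rw [Finset.sum_Icc_succ_top (by omega : 1 ≤ (L - 1) + 1)]
      rw [← hLsucc]
    have hSqval : Statement3Aux.Sq m x L = (L : ℤ) * m - ∑ k ∈ Finset.Icc 1 L, x k := by
      unfold Statement3Aux.Sq
      rw [Finset.sum_sub_distrib, Finset.sum_const, Nat.card_Icc, nsmul_eq_mul]
      push_cast
      ring_nf
    have hcastL : (L : ℤ) = (ℓ : ℤ) - 1 := by omega
    have hSqL : (m : ℤ) ≤ Statement3Aux.Sq m x L := by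
      rw [hSqval, hcastL]
      have : ∑ k ∈ Finset.Icc 1 L, x k ≤ ((ℓ : ℤ) - 2) * m := h1
      nlinarith [this]
    have hmono : ∑ i ∈ Finset.range L, Statement3Aux.gg m x i (m : ℤ)
        ≤ ∑ i ∈ Finset.range L, Statement3Aux.gg m x i (Statement3Aux.Sq m x L) :=
      Finset.sum_le_sum fun i _ => Statement3Aux.gg_mono m x i hSqL
    have hinv := Statement3Aux.inv m x hpos h2 (L - 1) (by omega)
    rw [← hLsucc] at hinv
    have hcast2 : (((L - 1 : ℕ)) : ℤ) = (ℓ : ℤ) - 2 := by omega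
    rw [hcast2] at hinv
    rw [hcols, hsplit]
    linarith
end

section
/- Let m ≥ 1, ℓ ≥ 2, and let x = (x_0,…,x_ℓ) be a sequence of nonnegative integers. Suppose there exists an index i with 0 < i ≤ ℓ−1 that is minimal such that i > 0 and x_i + x_{i+1} ≥ m. Suppose moreover that x_{i+1}+x_{i+2}+⋯+x_{ℓ−1} > (ℓ−i)m+1, and that either there exists some 2 ≤ j ≤ ℓ−1 with x_0+x_1+⋯+x_j > jm, or else x_0+x_1 ≥ m. Then degr(x) ≥ (ℓ−2)m. -/
open Finset

namespace S4Aux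

/-- centered partial sum -/
def SS (m : ℕ) (x : ℕ → ℤ) (a b : ℕ) : ℤ := ∑ k ∈ Finset.Icc a b, (x k - (m : ℤ))

/-- sum of `deltaP` over pairs `s ≤ a ≤ b ≤ e` -/
def FF (m : ℕ) (x : ℕ → ℤ) (s e : ℕ) : ℤ :=
  ∑ a ∈ Finset.Icc s e, ∑ b ∈ Finset.Icc a e, deltaP m x a b

lemma deltaP_def' (m : ℕ) (x : ℕ → ℤ) (a b : ℕ) :
    deltaP m x a b = min (x a) (max 0 (SS m x a b - 1)) := rfl

lemma deltaP_nonneg (m : ℕ) {x : ℕ → ℤ} {a : ℕ} (ha : 0 ≤ x a) (b : ℕ) :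
    0 ≤ deltaP m x a b := le_min ha (le_max_left _ _)

lemma deltaM_nonneg (m : ℕ) {x : ℕ → ℤ} {a : ℕ} (ha : 0 ≤ x (a - 1)) (b : ℕ) :
    0 ≤ deltaM m x a b := le_min ha (le_max_left _ _)

lemma sum_Icc_bot {f : ℕ → ℤ} {a b : ℕ} (h : a ≤ b) :
    ∑ k ∈ Icc a b, f k = f a + ∑ k ∈ Icc (a+1) b, f k := by
  rw [Finset.Icc_eq_cons_Ioc h, Finset.sum_cons, Finset.Icc_add_one_left_eq_Ioc]

lemma SS_bot (m : ℕ) (x : ℕ → ℤ) {a b : ℕ} (h : a ≤ b) :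
    SS m x a b = (x a - m) + SS m x (a+1) b := sum_Icc_bot h

lemma SS_top (m : ℕ) (x : ℕ → ℤ) {a b : ℕ} (h : a ≤ b + 1) :
    SS m x a (b+1) = SS m x a b + (x (b+1) - m) := Finset.sum_Icc_succ_top h _

lemma SS_congr (m : ℕ) {x y : ℕ → ℤ} {a b : ℕ} (h : ∀ k, a ≤ k → k ≤ b → x k = y k) :
    SS m x a b = SS m y a b := by
  unfold SS
  refine Finset.sum_congr rfl fun k hk => ?_
  simp only [Finset.mem_Icc] at hk
  rw [h k hk.1 hk.2]

lemma deltaP_congr (m : ℕ) {x y : ℕ → ℤ} {a b : ℕ} (h : ∀ k, a ≤ k → k ≤ b → x k = y k)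
    (hab : a ≤ b) : deltaP m x a b = deltaP m y a b := by
  rw [deltaP_def', deltaP_def', SS_congr m h, h a le_rfl hab]

/-- Column lemma: the column sum dominates `max 0 (SS c b - 1)`. -/
lemma colP_ge (m : ℕ) (x : ℕ → ℤ) :
    ∀ d c, (∀ k, c ≤ k → k ≤ c + d → 0 ≤ x k) →
      max 0 (SS m x c (c + d) - 1) ≤ ∑ a ∈ Icc c (c + d), deltaP m x a (c + d) := by
  intro d
  induction d with
  | zero =>
    intro c hx
    simp only [Nat.add_zero, Finset.Icc_self, Finset.sum_singleton]
    rw [deltaP_def']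
    have h0 : 0 ≤ x c := hx c le_rfl le_rfl
    have hm : (0:ℤ) ≤ (m:ℤ) := Int.natCast_nonneg m
    have hss : SS m x c c = x c - m := by simp [SS]
    rw [hss]
    exact le_min (max_le h0 (by linarith)) le_rfl
  | succ d ih =>
    intro c hx
    have hcb : c ≤ c + (d + 1) := by omega
    have hstep : c + 1 + d = c + (d + 1) := by omega
    rw [sum_Icc_bot hcb]
    have ih' := ih (c + 1) (by intro k h1 h2; exact hx k (by omega) (by omega))
    rw [hstep] at ih'
    have hSS : SS m x c (c + (d+1)) = (x c - m) + SS m x (c+1) (c + (d+1)) := SS_bot m x hcb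
    set P := SS m x (c+1) (c + (d+1)) with hP
    have hxc : 0 ≤ x c := hx c le_rfl (by omega)
    have hm : (0:ℤ) ≤ (m:ℤ) := Int.natCast_nonneg m
    have h1 : max 0 (P - 1) ≤ ∑ a ∈ Icc (c+1) (c + (d+1)), deltaP m x a (c + (d+1)) := ih'
    rw [deltaP_def', hSS]
    have e1 := le_max_left (0:ℤ) (P - 1)
    have e2 := le_max_right (0:ℤ) (P - 1)
    have e3 := le_max_left (0:ℤ) (x c - m + P - 1)
    have e4 := le_max_right (0:ℤ) (x c - m + P - 1)
    rcases max_choice (0:ℤ) (x c - m + P - 1) with h | h <;>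
    rcases max_choice (0:ℤ) (P - 1) with h' | h' <;>
    rcases min_choice (x c) (max 0 (x c - (m:ℤ) + P - 1)) with h'' | h'' <;>
      rw [show x c - (m:ℤ) + P - 1 = x c - m + P - 1 by ring] at * <;>
      omega
  
lemma FF_top (m : ℕ) (x : ℕ → ℤ) {s E : ℕ} (h : s ≤ E + 1) :
    FF m x s (E+1) = FF m x s E + ∑ a ∈ Icc s (E+1), deltaP m x a (E+1) := by
  unfold FF
  rw [Finset.sum_congr rfl (fun a ha => Finset.sum_Icc_succ_top (Finset.mem_Icc.mp ha).2
      (deltaP m x a)), Finset.sum_add_distrib, Finset.sum_Icc_succ_top h]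
  have h0 : ∑ b ∈ Icc (E+1) E, deltaP m x (E+1) b = 0 := by
    rw [Finset.Icc_eq_empty (by omega), Finset.sum_empty]
  rw [h0, add_zero]

lemma rowP_nonneg (m : ℕ) {x : ℕ → ℤ} {a : ℕ} (ha : 0 ≤ x a) (e : ℕ) :
    0 ≤ ∑ b ∈ Icc a e, deltaP m x a b :=
  Finset.sum_nonneg fun b _ => deltaP_nonneg m ha b

lemma FF_mono (m : ℕ) {x : ℕ → ℤ} {s s' e : ℕ} (h : s ≤ s')
    (hnn : ∀ k, s ≤ k → k ≤ e → 0 ≤ x k) : FF m x s' e ≤ FF m x s e := by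
  apply Finset.sum_le_sum_of_subset_of_nonneg
  · exact Finset.Icc_subset_Icc h le_rfl
  · intro a ha _
    simp only [Finset.mem_Icc] at ha
    exact rowP_nonneg m (hnn a ha.1 ha.2) e

lemma FF_nonneg (m : ℕ) {x : ℕ → ℤ} {s e : ℕ} (hnn : ∀ k, s ≤ k → k ≤ e → 0 ≤ x k) :
    0 ≤ FF m x s e := by
  apply Finset.sum_nonneg
  intro a ha
  simp only [Finset.mem_Icc] at ha
  exact rowP_nonneg m (hnn a ha.1 ha.2) e

/-- Merge lemma: collapsing the last two entries `x E, x (E+1)` into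
`x E + x (E+1) - m` costs at least `m`. -/
lemma merge (m : ℕ) (x z : ℕ → ℤ) (s c E : ℕ) (hsc : s ≤ c) (hcE : c ≤ E)
    (hnn : ∀ k, s ≤ k → k ≤ E + 1 → 0 ≤ x k)
    (hxe : (m:ℤ) + 1 ≤ x (E+1))
    (hcond : 2*(m:ℤ) + 2 ≤ SS m x c E + x (E+1))
    (hz : ∀ k, k ≠ E → z k = x k) (hzE : z E = x E + x (E+1) - (m:ℤ)) :
    FF m z s E + m ≤ FF m x s (E+1) := by
  have hsE : s ≤ E := le_trans hsc hcE
  have hmE : E ∈ Icc s E := by simp [hsE]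
  -- (a) SS z a E = SS x a (E+1) for a ≤ E
  have hSSz : ∀ a, a ≤ E → SS m z a E = SS m x a (E+1) := by
    intro a haE
    have h1 : SS m z a E = (∑ k ∈ Icc a E \ {E}, (z k - m)) + (z E - m) :=
      Finset.sum_eq_sum_sdiff_singleton_add (by simp [haE]) _
    have h2 : SS m x a E = (∑ k ∈ Icc a E \ {E}, (x k - m)) + (x E - m) :=
      Finset.sum_eq_sum_sdiff_singleton_add (by simp [haE]) _
    have h3 : (∑ k ∈ Icc a E \ {E}, (z k - (m:ℤ))) = ∑ k ∈ Icc a E \ {E}, (x k - m) := by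
      refine Finset.sum_congr rfl fun k hk => ?_
      simp only [Finset.mem_sdiff, Finset.mem_singleton] at hk
      rw [hz k hk.2]
    have h4 : SS m x a (E+1) = SS m x a E + (x (E+1) - m) := SS_top m x (by omega)
    rw [h1, h3, hzE, h4, h2]; ring
  -- (b) deltaP z a E = deltaP x a (E+1) for a < E
  have hdPz : ∀ a, a < E → deltaP m z a E = deltaP m x a (E+1) := by
    intro a haE
    rw [deltaP_def', deltaP_def', hSSz a (le_of_lt haE), hz a (by omega)]
  -- (c) deltaP z E E
  have hA : SS m x E (E+1) = x E + x (E+1) - 2*m := by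
    rw [SS_top m x (by omega)]; simp [SS]; ring
  set A : ℤ := x E + x (E+1) - 2*m - 1 with hAdef
  have hdPzE : deltaP m z E E = max 0 A := by
    rw [deltaP_def']
    have h1 : SS m z E E = z E - m := by simp [SS]
    rw [h1, hzE]
    have hxE : 0 ≤ x E := hnn E hsE (by omega)
    have : x E + x (E+1) - (m:ℤ) - m - 1 = A := by rw [hAdef]; ring
    rw [this]
    rcases max_choice 0 A with h | h <;> rw [h] <;>
      simp only [hAdef] at * <;>
      [exact min_eq_right (by linarith); exact min_eq_right (by linarith)]
  -- (d) rowwise relation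
  have hrow : ∀ a ∈ Icc s E, (∑ b ∈ Icc a E, deltaP m z a b) + deltaP m x a E
      = (∑ b ∈ Icc a E, deltaP m x a b) + deltaP m z a E := by
    intro a ha
    simp only [Finset.mem_Icc] at ha
    have hE : E ∈ Icc a E := by simp [ha.2]
    rw [Finset.sum_eq_sum_sdiff_singleton_add hE (deltaP m z a),
        Finset.sum_eq_sum_sdiff_singleton_add hE (deltaP m x a)]
    have h3 : (∑ b ∈ Icc a E \ {E}, deltaP m z a b) = ∑ b ∈ Icc a E \ {E}, deltaP m x a b := by
      refine Finset.sum_congr rfl fun b hb => ?_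
      simp only [Finset.mem_sdiff, Finset.mem_Icc, Finset.mem_singleton] at hb
      exact deltaP_congr m (fun k h1 h2 => hz k (by omega)) hb.1.1
    rw [h3]; ring
  -- (e) sum over a
  have hsum : FF m z s E + ∑ a ∈ Icc s E, deltaP m x a E
      = FF m x s E + ∑ a ∈ Icc s E, deltaP m z a E := by
    unfold FF
    rw [← Finset.sum_add_distrib, ← Finset.sum_add_distrib]
    exact Finset.sum_congr rfl hrow
  -- (f)
  have hf : ∑ a ∈ Icc s E, deltaP m z a E
      = (∑ a ∈ Icc s E \ {E}, deltaP m x a (E+1)) + max 0 A := by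
    rw [Finset.sum_eq_sum_sdiff_singleton_add hmE (fun a => deltaP m z a E), hdPzE]
    congr 1
    refine Finset.sum_congr rfl fun a ha => ?_
    simp only [Finset.mem_sdiff, Finset.mem_Icc, Finset.mem_singleton] at ha
    exact hdPz a (by omega)
  -- (g)
  have hg : FF m x s (E+1) = FF m x s E + ((∑ a ∈ Icc s E \ {E}, deltaP m x a (E+1))
      + deltaP m x E (E+1) + deltaP m x (E+1) (E+1)) := by
    rw [FF_top m x (by omega), Finset.sum_Icc_succ_top (by omega : s ≤ E + 1),
        Finset.sum_eq_sum_sdiff_singleton_add hmE (fun a => deltaP m x a (E+1))]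
  -- (h)
  have hh1 : deltaP m x (E+1) (E+1) = x (E+1) - m - 1 := by
    rw [deltaP_def']
    have h1 : SS m x (E+1) (E+1) = x (E+1) - m := by simp [SS]
    rw [h1]
    have hm : (0:ℤ) ≤ (m:ℤ) := Int.natCast_nonneg m
    rw [max_eq_right (by linarith)]
    exact min_eq_right (by linarith)
  have hh2 : deltaP m x E (E+1) = min (x E) (max 0 A) := by
    rw [deltaP_def', hA]
  -- (i) column bound
  have hcol : max 0 (SS m x c E - 1) ≤ ∑ a ∈ Icc s E, deltaP m x a E := by
    have h1 := colP_ge m x (E - c) c (by intro k h1 h2; exact hnn k (by omega) (by omega))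
    rw [show c + (E - c) = E by omega] at h1
    refine le_trans h1 (Finset.sum_le_sum_of_subset_of_nonneg
      (Finset.Icc_subset_Icc hsc le_rfl) ?_)
    intro a ha _
    simp only [Finset.mem_Icc] at ha
    exact deltaP_nonneg m (hnn a ha.1 (by omega)) E
  -- final arithmetic
  have hxE : 0 ≤ x E := hnn E hsE (by omega)
  have hm : (0:ℤ) ≤ (m:ℤ) := Int.natCast_nonneg m
  have e1 := le_max_left (0:ℤ) (SS m x c E - 1)
  have e2 := le_max_right (0:ℤ) (SS m x c E - 1)
  rcases max_choice (0:ℤ) A with h | h <;>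
  rcases min_choice (x E) (max 0 A) with h' | h' <;>
    omega


/-- Tail lemma: if `SS s e ≥ m+2` then `FF s e ≥ (e-s)m + SS s e - 1`. -/
lemma tail_ge (m : ℕ) : ∀ (d : ℕ) (x : ℕ → ℤ) (s : ℕ),
    (∀ k, s ≤ k → k ≤ s + d → 0 ≤ x k) → (m:ℤ) + 2 ≤ SS m x s (s + d) →
    (d:ℤ) * m + SS m x s (s + d) - 1 ≤ FF m x s (s + d) := by
  intro d
  induction d with
  | zero =>
    intro x s hnn hss
    simp only [Nat.add_zero] at *
    have hFF : FF m x s s = deltaP m x s s := by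
      unfold FF; simp
    have hss2 : SS m x s s = x s - m := by simp [SS]
    rw [hFF, deltaP_def', hss2]
    have hm : (0:ℤ) ≤ (m:ℤ) := Int.natCast_nonneg m
    rw [hss2] at hss
    rw [max_eq_right (by linarith), min_eq_right (by linarith)]
    push_cast; linarith
  | succ d ih =>
    intro x s hnn hss
    have hss' : (m:ℤ) + 2 ≤ SS m x s ((s+d)+1) := hss
    have hnn' : ∀ k, s ≤ k → k ≤ (s+d)+1 → 0 ≤ x k := hnn
    have hm : (0:ℤ) ≤ (m:ℤ) := Int.natCast_nonneg m
    have hmul : (((d+1:ℕ)):ℤ) * m = (d:ℤ) * m + m := by push_cast; ring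
    have hSSsplit : SS m x s ((s+d)+1) = SS m x s (s+d) + (x ((s+d)+1) - m) :=
      SS_top m x (by omega)
    show (((d+1:ℕ)):ℤ) * m + SS m x s ((s+d)+1) - 1 ≤ FF m x s ((s+d)+1)
    rcases le_or_gt (x ((s+d)+1)) (m:ℤ) with hxe | hxe
    · -- strip last
      have ih' := ih x s (fun k h1 h2 => hnn' k h1 (by omega)) (by omega)
      have hcol : max 0 (SS m x s ((s+d)+1) - 1)
          ≤ ∑ a ∈ Icc s ((s+d)+1), deltaP m x a ((s+d)+1) := by
        have h1 := colP_ge m x (d+1) s (fun k h1 h2 => hnn' k h1 (by omega))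
        exact h1
      have e1 := le_max_right (0:ℤ) (SS m x s ((s+d)+1) - 1)
      rw [FF_top m x (by omega)]
      omega
    · -- merge
      set z : ℕ → ℤ := fun k => if k = s + d then x (s+d) + x ((s+d)+1) - (m:ℤ) else x k
        with hzdef
      have hz : ∀ k, k ≠ s + d → z k = x k := by intro k hk; simp [hzdef, hk]
      have hzE : z (s+d) = x (s+d) + x ((s+d)+1) - (m:ℤ) := by simp [hzdef]
      have hSSz : SS m z s (s+d) = SS m x s ((s+d)+1) := by
        have h1 : SS m z s (s+d) = (∑ k ∈ Icc s (s+d) \ {s+d}, (z k - (m:ℤ))) + (z (s+d) - m) :=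
          Finset.sum_eq_sum_sdiff_singleton_add (by simp) _
        have h2 : SS m x s (s+d) = (∑ k ∈ Icc s (s+d) \ {s+d}, (x k - (m:ℤ))) + (x (s+d) - m) :=
          Finset.sum_eq_sum_sdiff_singleton_add (by simp) _
        have h3 : (∑ k ∈ Icc s (s+d) \ {s+d}, (z k - (m:ℤ)))
            = ∑ k ∈ Icc s (s+d) \ {s+d}, (x k - m) := by
          refine Finset.sum_congr rfl fun k hk => ?_
          simp only [Finset.mem_sdiff, Finset.mem_singleton] at hk
          rw [hz k hk.2]
        rw [h1, h3, hzE, hSSsplit, h2]; ring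
      have hmerge := merge m x z s s (s+d) le_rfl (by omega) hnn' (by omega)
        (by omega) hz hzE
      have hznn : ∀ k, s ≤ k → k ≤ s + d → 0 ≤ z k := by
        intro k h1 h2
        by_cases hk : k = s + d
        · rw [hk, hzE]
          have := hnn' (s+d) (by omega) (by omega)
          omega
        · rw [hz k hk]; exact hnn' k h1 (by omega)
      have ih' := ih z s hznn (by rw [hSSz]; omega)
      rw [hSSz] at ih'
      omega

/-- Key lemma: prefix-surplus version. -/
lemma key_ge (m : ℕ) : ∀ (d : ℕ) (x : ℕ → ℤ) (s p : ℕ),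
    s < p → p ≤ s + 1 + d →
    (∀ k, s ≤ k → k ≤ s + 1 + d → 0 ≤ x k) →
    (m:ℤ) + 2 ≤ SS m x (s+1) (s + 1 + d) → 1 ≤ SS m x s p →
    ((d:ℤ) + 1) * m + SS m x s p - 1 ≤ FF m x s (s + 1 + d) := by
  intro d
  induction d with
  | zero =>
    intro x s p hsp hpe hnn hss hssp
    simp only [Nat.add_zero] at *
    have hp : p = s + 1 := by omega
    subst hp
    have hm : (0:ℤ) ≤ (m:ℤ) := Int.natCast_nonneg m
    have hFF : FF m x s (s+1)
        = deltaP m x s s + (deltaP m x s (s+1) + deltaP m x (s+1) (s+1)) := by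
      rw [FF_top m x (by omega)]
      congr 1
      · unfold FF; simp
      · rw [Finset.sum_Icc_succ_top (by omega : s ≤ s + 1), Finset.Icc_self,
          Finset.sum_singleton]
    have hss1 : SS m x (s+1) (s+1) = x (s+1) - m := by simp [SS]
    have hss2 : SS m x s (s+1) = (x s - m) + (x (s+1) - m) := by
      rw [SS_bot m x (by omega), hss1]
    rw [hss1] at hss
    have hd1 : deltaP m x (s+1) (s+1) = x (s+1) - m - 1 := by
      rw [deltaP_def', hss1, max_eq_right (by linarith), min_eq_right (by linarith)]
    have hd2 : deltaP m x s (s+1) = x s := by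
      have hxs : 0 ≤ x s := hnn s le_rfl (by omega)
      rw [deltaP_def', hss2]
      rw [max_eq_right (by linarith), min_eq_left (by linarith)]
    have hd0 : 0 ≤ deltaP m x s s := deltaP_nonneg m (hnn s le_rfl (by omega)) s
    rw [hFF, hd1, hd2, hss2]
    push_cast
    linarith
  | succ d ih =>
    intro x s p hsp hpe hnn hss hssp
    have hss' : (m:ℤ) + 2 ≤ SS m x (s+1) ((s+1+d)+1) := hss
    have hnn' : ∀ k, s ≤ k → k ≤ (s+1+d)+1 → 0 ≤ x k := hnn
    have hpe' : p ≤ (s+1+d)+1 := hpe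
    have hm : (0:ℤ) ≤ (m:ℤ) := Int.natCast_nonneg m
    have hmul : ((((d+1:ℕ)):ℤ) + 1) * m = ((d:ℤ) + 1) * m + m := by push_cast; ring
    have hSSsplit : SS m x (s+1) ((s+1+d)+1) = SS m x (s+1) (s+1+d) + (x ((s+1+d)+1) - m) :=
      SS_top m x (by omega)
    show ((((d+1:ℕ)):ℤ) + 1) * m + SS m x s p - 1 ≤ FF m x s ((s+1+d)+1)
    rcases le_or_gt (x ((s+1+d)+1)) (m:ℤ) with hxe | hxe
    · -- strip last
      have hcol : max 0 (SS m x (s+1) ((s+1+d)+1) - 1)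
          ≤ ∑ a ∈ Icc (s+1) ((s+1+d)+1), deltaP m x a ((s+1+d)+1) := by
        have h1 := colP_ge m x (d+1) (s+1) (fun k h1 h2 => hnn' k (by omega) (by omega))
        rwa [show s + 1 + (d+1) = (s+1+d)+1 by omega] at h1
      have hcol2 : (∑ a ∈ Icc (s+1) ((s+1+d)+1), deltaP m x a ((s+1+d)+1))
          ≤ ∑ a ∈ Icc s ((s+1+d)+1), deltaP m x a ((s+1+d)+1) := by
        refine Finset.sum_le_sum_of_subset_of_nonneg
          (Finset.Icc_subset_Icc (by omega) le_rfl) ?_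
        intro a ha _
        simp only [Finset.mem_Icc] at ha
        exact deltaP_nonneg m (hnn' a ha.1 (by omega)) _
      have e1 := le_max_right (0:ℤ) (SS m x (s+1) ((s+1+d)+1) - 1)
      rcases Nat.lt_or_ge p ((s+1+d)+1) with hp | hp
      · -- p ≤ s+1+d
        have ih' := ih x s p hsp (by omega) (fun k h1 h2 => hnn' k h1 (by omega))
          (by omega) hssp
        rw [FF_top m x (by omega)]
        omega
      · -- p = (s+1+d)+1
        have hpE : p = (s+1+d)+1 := by omega
        subst hpE
        have hSSp : SS m x s ((s+1+d)+1) = SS m x s (s+1+d) + (x ((s+1+d)+1) - m) :=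
          SS_top m x (by omega)
        have ih' := ih x s (s+1+d) (by omega) (by omega)
          (fun k h1 h2 => hnn' k h1 (by omega)) (by omega) (by omega)
        rw [FF_top m x (by omega)]
        omega
    · -- merge
      set z : ℕ → ℤ := fun k => if k = s+1+d then x (s+1+d) + x ((s+1+d)+1) - (m:ℤ) else x k
        with hzdef
      have hz : ∀ k, k ≠ s+1+d → z k = x k := by intro k hk; simp [hzdef, hk]
      have hzE : z (s+1+d) = x (s+1+d) + x ((s+1+d)+1) - (m:ℤ) := by simp [hzdef]
      have hSSza : ∀ a, a ≤ s+1+d → SS m z a (s+1+d) = SS m x a ((s+1+d)+1) := by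
        intro a haE
        have h1 : SS m z a (s+1+d)
            = (∑ k ∈ Icc a (s+1+d) \ {s+1+d}, (z k - (m:ℤ))) + (z (s+1+d) - m) :=
          Finset.sum_eq_sum_sdiff_singleton_add (by simp [haE]) _
        have h2 : SS m x a (s+1+d)
            = (∑ k ∈ Icc a (s+1+d) \ {s+1+d}, (x k - (m:ℤ))) + (x (s+1+d) - m) :=
          Finset.sum_eq_sum_sdiff_singleton_add (by simp [haE]) _
        have h3 : (∑ k ∈ Icc a (s+1+d) \ {s+1+d}, (z k - (m:ℤ)))
            = ∑ k ∈ Icc a (s+1+d) \ {s+1+d}, (x k - m) := by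
          refine Finset.sum_congr rfl fun k hk => ?_
          simp only [Finset.mem_sdiff, Finset.mem_singleton] at hk
          rw [hz k hk.2]
        have h4 : SS m x a ((s+1+d)+1) = SS m x a (s+1+d) + (x ((s+1+d)+1) - m) :=
          SS_top m x (by omega)
        rw [h1, h3, hzE, h4, h2]; ring
      have hmerge := merge m x z s (s+1) (s+1+d) (by omega) (by omega) hnn' (by omega)
        (by omega) hz hzE
      have hznn : ∀ k, s ≤ k → k ≤ s + 1 + d → 0 ≤ z k := by
        intro k h1 h2
        by_cases hk : k = s+1+d
        · rw [hk, hzE]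
          have := hnn' (s+1+d) (by omega) (by omega)
          omega
        · rw [hz k hk]; exact hnn' k h1 (by omega)
      have hzSStail : (m:ℤ) + 2 ≤ SS m z (s+1) (s + 1 + d) := by
        rw [hSSza (s+1) (by omega)]
        omega
      rcases Nat.lt_or_ge p ((s+1+d)+1) with hp | hp
      · -- p ≤ s+1+d : use z with same p
        have hSSzp : SS m x s p ≤ SS m z s p := by
          rcases Nat.lt_or_ge p (s+1+d) with hpE | hpE
          · have heq : SS m z s p = SS m x s p := by
              refine (SS_congr m fun k h1 h2 => ?_).symm
              exact (hz k (by omega)).symm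
            omega
          · have hpeq : p = s+1+d := by omega
            subst hpeq
            have h5 := hSSza s (by omega)
            have h4 : SS m x s ((s+1+d)+1) = SS m x s (s+1+d) + (x ((s+1+d)+1) - m) :=
              SS_top m x (by omega)
            omega
        have ih' := ih z s p hsp (by omega) hznn hzSStail (by omega)
        omega
      · -- p = (s+1+d)+1
        have hpE : p = (s+1+d)+1 := by omega
        subst hpE
        have ih' := ih z s (s+1+d) (by omega) (by omega) hznn hzSStail
          (by rw [hSSza s (by omega)]; omega)
        rw [hSSza s (by omega)] at ih'
        omega


/-- Main front-induction lemma. -/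
lemma w3 (m : ℕ) : ∀ (d : ℕ) (x : ℕ → ℤ) (s t e j : ℕ) (β σ : ℤ),
    t = s + d → t + 1 ≤ j → j ≤ e →
    (∀ k, s ≤ k → k ≤ e → 0 ≤ x k) →
    (∀ k, s ≤ k → k < t → x k + x (k+1) + 1 ≤ (m:ℤ)) →
    (m:ℤ) + 2 ≤ SS m x (t+1) e →
    0 ≤ β → 0 ≤ σ → σ = SS m x s j + β - 1 →
    ((e:ℤ) - s) * m + σ ≤ ((d:ℤ) + 1) * β
      + (∑ a ∈ Icc (s+1) t, ((t:ℤ) - a + 1) * x (a-1)) + FF m x s e := by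
  intro d
  induction d with
  | zero =>
    intro x s t e j β σ ht hj1 hj2 hnn _hmin hSS hβ hσ0 hσ
    have hts : t = s := by omega
    subst hts
    have hGG : (∑ a ∈ Icc (t+1) t, ((t:ℤ) - a + 1) * x (a-1)) = 0 := by
      rw [Finset.Icc_eq_empty (by omega), Finset.sum_empty]
    rw [hGG]
    have hm : (0:ℤ) ≤ (m:ℤ) := Int.natCast_nonneg m
    obtain ⟨d', rfl⟩ : ∃ d', e = t + 1 + d' := ⟨e - t - 1, by omega⟩
    have hcast : ((t + 1 + d' : ℕ):ℤ) - (t:ℤ) = (d':ℤ) + 1 := by push_cast; ring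
    simp only [Nat.cast_zero, zero_add, one_mul]
    rcases le_or_gt 1 (SS m x t j) with hkey | hkey
    · have h := key_ge m d' x t j (by omega) (by omega) hnn hSS hkey
      have hprod : (((t+1+d' : ℕ):ℤ) - t) * m = ((d':ℤ) + 1) * m := by rw [hcast]
      rw [hprod]
      linarith
    · -- tail branch
      have htail := tail_ge m d' x (t+1) (fun k h1 h2 => hnn k (by omega) (by omega))
        (by exact hSS)
      have hmono : FF m x (t+1) (t+1+d') ≤ FF m x t (t+1+d') :=
        FF_mono m (by omega) hnn
      have hprod : (((t+1+d' : ℕ):ℤ) - t) * m = (d':ℤ) * m + m := by rw [hcast]; ring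
      rw [hprod]
      linarith
  | succ d ih =>
    intro x s t e j β σ ht hj1 hj2 hnn hmin hSS hβ hσ0 hσ
    have hxs : x s ≤ (m:ℤ) - 1 := by
      have h1 := hmin s le_rfl (by omega)
      have h2 := hnn (s+1) (by omega) (by omega)
      linarith
    have hxs0 : 0 ≤ x s := hnn s le_rfl (by omega)
    have hsj : s ≤ j := by omega
    have hSSbot : SS m x s j = (x s - m) + SS m x (s+1) j := SS_bot m x (by omega)
    have ih' := ih x (s+1) t e j β (σ + m - x s) (by omega) hj1 hj2
      (fun k h1 h2 => hnn k (by omega) h2)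
      (fun k h1 h2 => hmin k (by omega) h2)
      hSS hβ (by linarith) (by rw [hσ]; rw [hSSbot]; ring)
    -- GG split
    have hst : s + 1 ≤ t := by omega
    have hGG : (∑ a ∈ Icc (s+1) t, ((t:ℤ) - a + 1) * x (a-1))
        = ((t:ℤ) - ((s+1:ℕ):ℤ) + 1) * x ((s+1)-1)
          + ∑ a ∈ Icc (s+2) t, ((t:ℤ) - a + 1) * x (a-1) :=
      sum_Icc_bot hst
    have hco : ((t:ℤ) - ((s+1:ℕ):ℤ) + 1) = (d:ℤ) + 1 := by
      have : (t:ℤ) = (s:ℤ) + (d:ℤ) + 1 := by exact_mod_cast congrArg (Nat.cast : ℕ → ℤ) ht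
      push_cast at *
      linarith
    have hs1 : (s+1) - 1 = s := by omega
    rw [hGG, hco, hs1]
    have hmono : FF m x (s+1) e ≤ FF m x s e := FF_mono m (by omega) hnn
    have hp1 : ((((d+1:ℕ)):ℤ) + 1) * β = ((d:ℤ) + 1) * β + β := by push_cast; ring
    have hp2 : ((e:ℤ) - (s:ℤ)) * m = ((e:ℤ) - ((s+1:ℕ):ℤ)) * m + m := by push_cast; ring
    have hp3 : ((d:ℤ) + 1) * x s = (d:ℤ) * x s + x s := by ring
    have hp4 : 0 ≤ (d:ℤ) * x s := mul_nonneg (Int.natCast_nonneg d) hxs0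
    rw [hp1, hp2]
    linarith

/-- Harvest of `deltaM` terms in the low region. -/
lemma harvestM (m : ℕ) (x : ℕ → ℤ) (i e : ℕ) (h2i : 2 ≤ i) (hie : i ≤ e)
    (hpos : ∀ k, 0 ≤ x k)
    (hmin : ∀ k, 1 ≤ k → k < i → x k + x (k+1) + 1 ≤ (m:ℤ)) :
    (∑ a ∈ Icc 2 i, ((i:ℤ) + 1 - a) * x (a-1)) + (i:ℤ) * min (x 0) ((m:ℤ) - x 1)
      ≤ ∑ a ∈ Icc 1 e, ∑ b ∈ Icc a e, deltaM m x a b := by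
  have hub : ∀ k, 2 ≤ k → k ≤ i → x k ≤ (m:ℤ) - 1 := by
    intro k h2 hk
    have h := hmin (k-1) (by omega) (by omega)
    rw [show k - 1 + 1 = k by omega] at h
    have := hpos (k-1)
    linarith
  -- step 1: restrict rows to [1, i]
  have hstep1 : (∑ a ∈ Icc 1 i, ∑ b ∈ Icc a e, deltaM m x a b)
      ≤ ∑ a ∈ Icc 1 e, ∑ b ∈ Icc a e, deltaM m x a b := by
    refine Finset.sum_le_sum_of_subset_of_nonneg (Finset.Icc_subset_Icc le_rfl hie) ?_
    intro a _ _
    exact Finset.sum_nonneg fun b _ => deltaM_nonneg m (hpos (a-1)) b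
  -- split off row 1
  have hsplit : (∑ a ∈ Icc 1 i, ∑ b ∈ Icc a e, deltaM m x a b)
      = (∑ b ∈ Icc 1 e, deltaM m x 1 b)
        + ∑ a ∈ Icc 2 i, ∑ b ∈ Icc a e, deltaM m x a b :=
    sum_Icc_bot (by omega)
  -- row 1 bound
  have hrow1 : (i:ℤ) * min (x 0) ((m:ℤ) - x 1) ≤ ∑ b ∈ Icc 1 e, deltaM m x 1 b := by
    have h1 : (∑ b ∈ Icc 1 i, deltaM m x 1 b) ≤ ∑ b ∈ Icc 1 e, deltaM m x 1 b := by
      refine Finset.sum_le_sum_of_subset_of_nonneg (Finset.Icc_subset_Icc le_rfl hie) ?_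
      intro b _ _
      exact deltaM_nonneg m (hpos 0) b
    have h2 : ∀ b ∈ Icc 1 i, min (x 0) ((m:ℤ) - x 1) ≤ deltaM m x 1 b := by
      intro b hb
      simp only [Finset.mem_Icc] at hb
      unfold deltaM
      have hsum : ((m:ℤ) - x 1) ≤ ∑ k ∈ Icc 1 b, ((m:ℤ) - x k) := by
        rw [sum_Icc_bot hb.1]
        have : (0:ℤ) ≤ ∑ k ∈ Icc (1+1) b, ((m:ℤ) - x k) := by
          refine Finset.sum_nonneg fun k hk => ?_
          simp only [Finset.mem_Icc] at hk
          have := hub k hk.1 (le_trans hk.2 hb.2)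
          linarith
        linarith
      refine min_le_min (by norm_num) ?_
      exact le_trans hsum (le_max_right _ _)
    calc (i:ℤ) * min (x 0) ((m:ℤ) - x 1)
        = (Icc 1 i).card • min (x 0) ((m:ℤ) - x 1) := by
          rw [Nat.card_Icc, nsmul_eq_mul]
          congr 1
      _ = ∑ _b ∈ Icc 1 i, min (x 0) ((m:ℤ) - x 1) := by rw [Finset.sum_const]
      _ ≤ ∑ b ∈ Icc 1 i, deltaM m x 1 b := Finset.sum_le_sum h2
      _ ≤ _ := h1
  -- rows 2..i
  have hrows : (∑ a ∈ Icc 2 i, ((i:ℤ) + 1 - a) * x (a-1))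
      ≤ ∑ a ∈ Icc 2 i, ∑ b ∈ Icc a e, deltaM m x a b := by
    refine Finset.sum_le_sum fun a ha => ?_
    simp only [Finset.mem_Icc] at ha
    have h1 : (∑ b ∈ Icc a i, deltaM m x a b) ≤ ∑ b ∈ Icc a e, deltaM m x a b := by
      refine Finset.sum_le_sum_of_subset_of_nonneg (Finset.Icc_subset_Icc le_rfl hie) ?_
      intro b _ _
      exact deltaM_nonneg m (hpos (a-1)) b
    have h2 : ∀ b ∈ Icc a i, x (a-1) ≤ deltaM m x a b := by
      intro b hb
      simp only [Finset.mem_Icc] at hb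
      unfold deltaM
      have hsum : x (a-1) + 1 ≤ ∑ k ∈ Icc a b, ((m:ℤ) - x k) := by
        rw [sum_Icc_bot hb.1]
        have hma : x (a-1) + 1 ≤ (m:ℤ) - x a := by
          have h := hmin (a-1) (by omega) (by omega)
          rw [show a - 1 + 1 = a by omega] at h
          linarith
        have : (0:ℤ) ≤ ∑ k ∈ Icc (a+1) b, ((m:ℤ) - x k) := by
          refine Finset.sum_nonneg fun k hk => ?_
          simp only [Finset.mem_Icc] at hk
          have := hub k (by omega) (le_trans hk.2 hb.2)
          linarith
        linarith
      exact le_min le_rfl (le_trans (by linarith) (le_max_right _ _))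
    calc ((i:ℤ) + 1 - a) * x (a-1)
        = (Icc a i).card • x (a-1) := by
          rw [Nat.card_Icc, nsmul_eq_mul]
          congr 1
          omega
      _ = ∑ _b ∈ Icc a i, x (a-1) := by rw [Finset.sum_const]
      _ ≤ ∑ b ∈ Icc a i, deltaM m x a b := Finset.sum_le_sum h2
      _ ≤ _ := h1
  linarith


end S4Aux

/-- Claim `bound2`. -/
theorem statement4 (ℓ m : ℕ) (hm : 1 ≤ m) (hl : 2 ≤ ℓ) (x : ℕ → ℤ)
    (hpos : ∀ i, 0 ≤ x i)
    (i : ℕ) (hi0 : 0 < i) (hil : i ≤ ℓ - 1)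
    (hi : (m : ℤ) ≤ x i + x (i + 1))
    (hmin : ∀ i', 0 < i' → i' < i → x i' + x (i' + 1) < (m : ℤ))
    (hbig : ((ℓ : ℤ) - i) * m + 1 < ∑ k ∈ Finset.Icc (i + 1) (ℓ - 1), x k)
    (hor : (∃ j, 2 ≤ j ∧ j ≤ ℓ - 1 ∧ (j : ℤ) * m < ∑ k ∈ Finset.range (j + 1), x k) ∨
      (m : ℤ) ≤ x 0 + x 1) :
    ((ℓ : ℤ) - 2) * m ≤ degr ℓ m x := by
    classical
  obtain ⟨e, rfl⟩ : ∃ e, ℓ = e + 1 := ⟨ℓ - 1, (Nat.succ_pred_eq_of_pos (by omega)).symm⟩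
  simp only [Nat.add_sub_cancel] at hil hbig hor ⊢
  have hm' : (1:ℤ) ≤ (m:ℤ) := by exact_mod_cast hm
  have hmin' : ∀ k, 1 ≤ k → k < i → x k + x (k+1) + 1 ≤ (m:ℤ) := by
    intro k h1 h2; have := hmin k h1 h2; omega
  have hie : i + 1 ≤ e := by
    by_contra hcon
    have hieq : Finset.Icc (i+1) e = ∅ := Finset.Icc_eq_empty (by omega)
    rw [hieq, Finset.sum_empty] at hbig
    have hc : (((e+1:ℕ)):ℤ) - i = 1 := by omega
    rw [hc, one_mul] at hbig
    linarith
  have hSStail : (m:ℤ) + 2 ≤ S4Aux.SS m x (i+1) e := by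
    have hc : S4Aux.SS m x (i+1) e
        = (∑ k ∈ Finset.Icc (i+1) e, x k) - ((e + 1 - (i+1) : ℕ):ℤ) * m := by
      unfold S4Aux.SS
      rw [Finset.sum_sub_distrib, Finset.sum_const, Nat.card_Icc, nsmul_eq_mul]
    have hc2 : (((e+1:ℕ):ℤ) - i) * m = ((e + 1 - (i+1) : ℕ):ℤ) * m + m := by
      have hcc : (((e+1:ℕ):ℤ) - i) = ((e + 1 - (i+1) : ℕ):ℤ) + 1 := by omega
      rw [hcc]; ring
    rw [hc]
    rw [hc2] at hbig
    linarith
  have hdegr : degr (e+1) m x = S4Aux.FF m x 1 e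
      + ∑ a ∈ Finset.Icc 1 e, ∑ b ∈ Finset.Icc a e, deltaM m x a b := rfl
  have hMnonneg : 0 ≤ ∑ a ∈ Finset.Icc 1 e, ∑ b ∈ Finset.Icc a e, deltaM m x a b :=
    Finset.sum_nonneg fun a _ => Finset.sum_nonneg fun b _ => S4Aux.deltaM_nonneg m (hpos _) b
  rcases Nat.lt_or_ge i 2 with hi1 | hi2
  · -- Case I : i = 1
    have h1 : i = 1 := by omega
    subst h1
    obtain ⟨d, hd⟩ : ∃ d, e = 2 + d := ⟨e - 2, by omega⟩
    have hSS2 : (m:ℤ) + 2 ≤ S4Aux.SS m x 2 e := hSStail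
    have htail := S4Aux.tail_ge m d x 2 (fun k _ _ => hpos k) (by rw [← hd]; exact hSS2)
    have hmono : S4Aux.FF m x 2 (2+d) ≤ S4Aux.FF m x 1 (2+d) :=
      S4Aux.FF_mono m (by omega) (fun k _ _ => hpos k)
    rw [← hd] at htail hmono
    have hprod : (((e+1:ℕ):ℤ) - 2) * m = (d:ℤ)*m + m := by
      have hc : ((e+1:ℕ):ℤ) - 2 = (d:ℤ) + 1 := by omega
      rw [hc]; ring
    rw [hdegr, hprod]
    linarith
  · -- i ≥ 2
    have hx1 : x 1 ≤ (m:ℤ) - 1 := by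
      have h1 := hmin' 1 le_rfl (by omega)
      have h2 := hpos 2
      linarith
    have hharv := S4Aux.harvestM m x i e hi2 (by omega) hpos hmin'
    obtain ⟨d, hd⟩ : ∃ d, e = (i+1) + d := ⟨e - (i+1), by omega⟩
    rcases le_or_gt ((m:ℤ) - x 1) (x 0) with hc2 | hc3
    · -- Case II
      have hminv : min (x 0) ((m:ℤ) - x 1) = (m:ℤ) - x 1 := min_eq_right hc2
      have htail := S4Aux.tail_ge m d x (i+1) (fun k _ _ => hpos k)
        (by rw [← hd]; exact hSStail)
      have hmono : S4Aux.FF m x (i+1) ((i+1)+d) ≤ S4Aux.FF m x 1 ((i+1)+d) :=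
        S4Aux.FF_mono m (by omega) (fun k _ _ => hpos k)
      rw [← hd] at htail hmono
      have hGG1 : ((i:ℤ) - 1) * x 1 ≤ ∑ a ∈ Finset.Icc 2 i, ((i:ℤ) + 1 - a) * x (a-1) := by
        have h2m : (2:ℕ) ∈ Finset.Icc 2 i := by
          simp only [Finset.mem_Icc]; omega
        have hs := Finset.single_le_sum (f := fun a : ℕ => ((i:ℤ) + 1 - a) * x (a-1))
          (fun a ha => by
            simp only [Finset.mem_Icc] at ha
            have hc : (0:ℤ) ≤ (i:ℤ) + 1 - a := by omega
            exact mul_nonneg hc (hpos (a-1))) h2m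
        have hs' : ((i:ℤ) + 1 - ((2:ℕ):ℤ)) * x (2-1)
            ≤ ∑ a ∈ Finset.Icc 2 i, ((i:ℤ) + 1 - a) * x (a-1) := hs
        have h2c : ((2:ℕ):ℤ) = 2 := by norm_num
        have heq : ((i:ℤ) + 1 - ((2:ℕ):ℤ)) * x (2-1) = ((i:ℤ) - 1) * x 1 := by
          rw [h2c]
          show ((i:ℤ) + 1 - 2) * x 1 = _
          ring
        rw [heq] at hs'
        exact hs'
      have hp1 : (((e+1:ℕ):ℤ) - 2) * m = (i:ℤ)*m + (d:ℤ)*m := by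
        have hc : ((e+1:ℕ):ℤ) - 2 = (i:ℤ) + d := by omega
        rw [hc]; ring
      have hp2 : (i:ℤ) * ((m:ℤ) - x 1) = (i:ℤ)*m - (i:ℤ)*x 1 := by ring
      have hp3 : ((i:ℤ)-1) * x 1 = (i:ℤ)*x 1 - x 1 := by ring
      rw [hminv] at hharv
      rw [hdegr, hp1]
      linarith
    · -- Case III
      have hminv : min (x 0) ((m:ℤ) - x 1) = x 0 := min_eq_left (le_of_lt hc3)
      rcases hor with ⟨j, hj2, hjl, hjs⟩ | hor2
      swap
      · exfalso; linarith
      have hrange : ∑ k ∈ Finset.range (j+1), x k = x 0 + ∑ k ∈ Finset.Icc 1 j, x k := by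
        rw [← Nat.Ico_zero_eq_range, Finset.Ico_add_one_right_eq_Icc, S4Aux.sum_Icc_bot (Nat.zero_le j)]
      rw [hrange] at hjs
      have hQ : ∀ t, 1 ≤ t → t ≤ i →
          (∑ k ∈ Finset.Icc 1 t, x k) ≤ ((t:ℤ)-1)*((m:ℤ)-1) + x t := by
        intro t
        induction t with
        | zero => intro h1 _; exact absurd h1 (by omega)
        | succ t iht =>
          intro _ h2
          rcases Nat.eq_zero_or_pos t with rfl | ht0
          · simp
          · rw [Finset.sum_Icc_succ_top (by omega : 1 ≤ t + 1) x]
            have hQt := iht ht0 (by omega)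
            have hmt := hmin' t ht0 (by omega)
            have hcast : (((t+1:ℕ)):ℤ) - 1 = ((t:ℤ) - 1) + 1 := by push_cast; ring
            have hpx := hpos (t+1)
            rw [hcast, show (((t:ℤ) - 1) + 1) * ((m:ℤ)-1) = ((t:ℤ)-1)*((m:ℤ)-1) + ((m:ℤ)-1)
              from by ring]
            linarith
      have hji : i + 1 ≤ j := by
        by_contra hcon
        push_neg at hcon
        obtain ⟨t, rfl⟩ : ∃ t, j = t + 1 := ⟨j - 1, by omega⟩
        have hQt := hQ t (by omega) (by omega)
        have hmt := hmin' t (by omega) (by omega)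
        rw [Finset.sum_Icc_succ_top (by omega : 1 ≤ t+1) x] at hjs
        have hpx1 := hpos 1
        have hprods : (((t+1:ℕ)):ℤ) * m = (t:ℤ)*m + m := by push_cast; ring
        have hprod2 : ((t:ℤ)-1)*((m:ℤ)-1) = (t:ℤ)*(m:ℤ) - t - m + 1 := by ring
        have htp : (1:ℤ) ≤ (t:ℤ) := by exact_mod_cast (by omega : 1 ≤ t)
        linarith
      have hSS1j : S4Aux.SS m x 1 j = (∑ k ∈ Finset.Icc 1 j, x k) - (j:ℤ)*m := by
        unfold S4Aux.SS
        rw [Finset.sum_sub_distrib, Finset.sum_const, Nat.card_Icc, nsmul_eq_mul]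
        have hc : ((j + 1 - 1:ℕ):ℤ) = (j:ℤ) := by omega
        rw [hc]
      set σ : ℤ := S4Aux.SS m x 1 j + x 0 - 1 with hσdef
      have hσ0 : 0 ≤ σ := by rw [hσdef, hSS1j]; linarith
      have hw3 := S4Aux.w3 m (i-1) x 1 i e j (x 0) σ (by omega) hji hjl
        (fun k _ _ => hpos k) (fun k h1 h2 => hmin' k h1 h2) hSStail (hpos 0) hσ0 hσdef
      have hGGeq : (∑ a ∈ Finset.Icc (1+1) i, ((i:ℤ) - a + 1) * x (a-1))
          = ∑ a ∈ Finset.Icc 2 i, ((i:ℤ) + 1 - a) * x (a-1) := by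
        refine Finset.sum_congr rfl fun a _ => ?_
        ring
      have hβeq : ((((i-1:ℕ)):ℤ) + 1) * x 0 = (i:ℤ) * x 0 := by
        have hc : ((i-1:ℕ):ℤ) = (i:ℤ) - 1 := by omega
        rw [hc]; ring
      have hgoal : (((e+1:ℕ):ℤ) - 2) * m = ((e:ℤ) - 1) * m := by
        have hc : ((e+1:ℕ):ℤ) - 2 = (e:ℤ) - 1 := by omega
        rw [hc]
      rw [hdegr, hgoal]
      rw [hminv] at hharv
      rw [hGGeq, hβeq] at hw3
      push_cast at hw3
      linarith
end
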